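/- arXiv:2103.03165 — 2 statements merged into one kernel-verified Lean document; each statement's English description precedes it below -/
import Mathlib

section
/- Let m ≥ 2 and let b_1, ..., b_m be integers with b_i ≥ 2, and let a_1 ≤ a_2 ≤ a_3 be positive integers with a_1 + a_2 + a_3 = b_1 + ... + b_m, a_3 ≤ m, and a_1 < m. Then there exist nonnegative integers c_{i,j} (for 1 ≤ i ≤ m, 1 ≤ j ≤ 3) such that: (1) for each i, c_{i,1} + c_{i,2} + c_{i,3} = b_i; (2) for each i, exactly two of c_{i,1}, c_{i,2}, c_{i,3} are nonzero (equivalently, each nonzero c_{i,j} satisfies 1 ≤ c_{i,j} ≤ b_i - 1 and there are exactly two of them); (3) for each j, c_{1,j} + ... + c_{m,j} = a_j. -/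
open Finset

-- indicator sum helper
lemma sum_ind (m t : ℕ) (h : t ≤ m) :
    ∑ k ∈ Finset.range m, (if k < t then (1:ℤ) else 0) = t := by
  rw [Finset.sum_boole]
  congr 1
  have : (Finset.range m).filter (fun k => k < t) = Finset.range t := by
    ext k; simp [Finset.mem_range]; omega
  rw [this, Finset.card_range]

lemma sum3 (f : Fin 3 → ℤ) (j k l : Fin 3) (hjk : j ≠ k) (hjl : j ≠ l) (hkl : k ≠ l) :
    f j + f k + f l = ∑ t, f t := by
  fin_cases j <;> fin_cases k <;> fin_cases l <;> simp_all [Fin.sum_univ_three] <;> ring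

lemma cover3 (j k l t : Fin 3) (hjk : j ≠ k) (hjl : j ≠ l) (hkl : k ≠ l) :
    t = j ∨ t = k ∨ t = l := by
  fin_cases j <;> fin_cases k <;> fin_cases l <;> fin_cases t <;> simp_all

lemma filter_pair (j k : Fin 3) (h : j ≠ k) (r : Fin 3 → ℤ)
    (hr : ∀ t, r t ≠ 0 ↔ (t = j ∨ t = k)) :
    (Finset.univ.filter fun t => r t ≠ 0).card = 2 := by
  have he : (Finset.univ.filter fun t => r t ≠ 0) = {j, k} := by
    ext t; simp [hr]
  rw [he, Finset.card_insert_of_notMem (by simp [h]), Finset.card_singleton]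

lemma sort3 (a : Fin 3 → ℤ) :
    ∃ j k l : Fin 3, j ≠ k ∧ j ≠ l ∧ k ≠ l ∧ a l ≤ a k ∧ a k ≤ a j := by
  rcases le_total (a 0) (a 1) with h01 | h01 <;>
    rcases le_total (a 1) (a 2) with h12 | h12 <;>
      rcases le_total (a 0) (a 2) with h02 | h02
  · exact ⟨2, 1, 0, by decide, by decide, by decide, h01, h12⟩
  · exact ⟨2, 1, 0, by decide, by decide, by decide, h01, h12⟩
  · exact ⟨1, 2, 0, by decide, by decide, by decide, h02, h12⟩
  · exact ⟨1, 0, 2, by decide, by decide, by decide, h02, h01⟩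
  · exact ⟨2, 0, 1, by decide, by decide, by decide, h01, h02⟩
  · exact ⟨0, 2, 1, by decide, by decide, by decide, h12, h02⟩
  · exact ⟨0, 1, 2, by decide, by decide, by decide, h12, h01⟩
  · exact ⟨0, 1, 2, by decide, by decide, by decide, h12, h01⟩

lemma sum2 (f : Fin 2 → ℤ) (i0 i1 : Fin 2) (h : i0 ≠ i1) :
    f i0 + f i1 = ∑ i, f i := by
  fin_cases i0 <;> fin_cases i1 <;> simp_all [Fin.sum_univ_two] <;> ring

def Good (m : ℕ) (b : Fin m → ℤ) (a : Fin 3 → ℤ) : Prop :=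
  ∃ c : Fin m → Fin 3 → ℤ, (∀ i j, 0 ≤ c i j) ∧
      (∀ i, c i 0 + c i 1 + c i 2 = b i) ∧
      (∀ i, (Finset.univ.filter fun j => c i j ≠ 0).card = 2) ∧
      (∀ j, ∑ i, c i j = a j)

lemma all2 (m : ℕ) (b : Fin m → ℤ) (hb : ∀ i, b i = 2) (a : Fin 3 → ℤ)
    (ha1 : ∀ j, 1 ≤ a j) (ha2 : ∀ j, a j ≤ (m:ℤ))
    (hsum : ∑ j, a j = ∑ i, b i) : Good m b a := by
  have hsb : ∑ i, b i = 2 * m := by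
    rw [Finset.sum_congr rfl (fun i _ => hb i), Finset.sum_const, Finset.card_univ,
      Fintype.card_fin]
    push_cast; ring
  have hA : a 0 + a 1 + a 2 = 2 * m := by
    rw [← Fin.sum_univ_three a, hsum, hsb]
  set t1 : ℕ := ((m:ℤ) - a 2).toNat with ht1def
  set t2 : ℕ := (a 0).toNat with ht2def
  have ha20 := ha1 0; have ha21 := ha1 1; have ha22 := ha1 2
  have hb0 := ha2 0; have hb1 := ha2 1; have hb2 := ha2 2
  have ht1 : (t1:ℤ) = m - a 2 := by omega
  have ht2 : (t2:ℤ) = a 0 := by omega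
  have h12 : t1 ≤ t2 := by omega
  have h2m : t2 ≤ m := by omega
  have h1m : t1 ≤ m := by omega
  refine ⟨fun i => if (i:ℕ) < t1 then ![1,1,0] else if (i:ℕ) < t2 then ![1,0,1] else ![0,1,1],
    ?_, ?_, ?_, ?_⟩
  · intro i j; dsimp only; split_ifs <;> fin_cases j <;> norm_num
  · intro i; dsimp only; rw [hb i]; split_ifs <;> norm_num <;> decide
  · intro i; dsimp only; split_ifs <;> decide
  · intro j
    dsimp only
    rcases cover3 0 1 2 j (by decide) (by decide) (by decide) with rfl | rfl | rfl
    · have e1 : ∀ i : Fin m,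
          (if (i:ℕ) < t1 then ![(1:ℤ),1,0] else if (i:ℕ) < t2 then ![1,0,1] else ![0,1,1]) 0
          = (fun k : ℕ => if k < t2 then (1:ℤ) else 0) (i:ℕ) := by
        intro i; split_ifs <;> simp_all <;> omega
      rw [Finset.sum_congr rfl (fun i _ => e1 i),
        Fin.sum_univ_eq_sum_range (fun k => if k < t2 then (1:ℤ) else 0) m,
        sum_ind m t2 h2m, ht2]
    · have e1 : ∀ i : Fin m,
          (if (i:ℕ) < t1 then ![(1:ℤ),1,0] else if (i:ℕ) < t2 then ![1,0,1] else ![0,1,1]) 1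
          = (fun k : ℕ => (if k < t1 then (1:ℤ) else 0) + (1 - if k < t2 then (1:ℤ) else 0)) (i:ℕ) := by
        intro i; split_ifs <;> simp_all <;> omega
      rw [Finset.sum_congr rfl (fun i _ => e1 i),
        Fin.sum_univ_eq_sum_range (fun k => (if k < t1 then (1:ℤ) else 0) + (1 - if k < t2 then (1:ℤ) else 0)) m,
        Finset.sum_add_distrib, Finset.sum_sub_distrib, sum_ind m t1 h1m, sum_ind m t2 h2m,
        Finset.sum_const, Finset.card_range]
      simp only [nsmul_eq_mul, mul_one]
      omega
    · have e1 : ∀ i : Fin m,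
          (if (i:ℕ) < t1 then ![(1:ℤ),1,0] else if (i:ℕ) < t2 then ![1,0,1] else ![0,1,1]) 2
          = (fun k : ℕ => (1 - if k < t1 then (1:ℤ) else 0)) (i:ℕ) := by
        intro i; split_ifs <;> simp_all <;> omega
      rw [Finset.sum_congr rfl (fun i _ => e1 i),
        Fin.sum_univ_eq_sum_range (fun k => (1 - if k < t1 then (1:ℤ) else 0)) m,
        Finset.sum_sub_distrib, sum_ind m t1 h1m, Finset.sum_const, Finset.card_range]
      simp only [nsmul_eq_mul, mul_one]
      omega

lemma base2 (b : Fin 2 → ℤ) (hb : ∀ i, 2 ≤ b i) (i0 : Fin 2) (hB : 3 ≤ b i0)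
    (a : Fin 3 → ℤ) (ha1 : ∀ j, 1 ≤ a j) (ha2 : ∀ j, a j ≤ 2)
    (hex : ∃ j, a j < 2) (hsum : ∑ j, a j = ∑ i, b i) : Good 2 b a := by
  obtain ⟨j0, hj0⟩ := hex
  obtain ⟨i1, hi01⟩ : ∃ i1 : Fin 2, i0 ≠ i1 := by
    fin_cases i0
    exacts [⟨1, by decide⟩, ⟨0, by decide⟩]
  obtain ⟨j1, j2, h01, h02, h12⟩ : ∃ j1 j2 : Fin 3, j0 ≠ j1 ∧ j0 ≠ j2 ∧ j1 ≠ j2 := by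
    fin_cases j0
    exacts [⟨1, 2, by decide, by decide, by decide⟩, ⟨0, 2, by decide, by decide, by decide⟩,
      ⟨0, 1, by decide, by decide, by decide⟩]
  have hsa : a j0 + a j1 + a j2 = ∑ j, a j := sum3 a j0 j1 j2 h01 h02 h12
  have hsb : b i0 + b i1 = ∑ i, b i := sum2 b i0 i1 hi01
  have e0 : a j0 = 1 := by have := ha1 j0; omega
  have hbi1 := hb i1
  have haj1 := ha1 j1; have haj2 := ha1 j2
  have haj1' := ha2 j1; have haj2' := ha2 j2
  have e1 : a j1 = 2 := by omega
  have e2 : a j2 = 2 := by omega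
  have eb0 : b i0 = 3 := by omega
  have eb1 : b i1 = 2 := by omega
  have key : ∀ r : Fin 3 → ℤ, r 0 + r 1 + r 2 = r j0 + r j1 + r j2 := fun r => by
    rw [sum3 r j0 j1 j2 h01 h02 h12, Fin.sum_univ_three]
  refine ⟨fun i t => if i = i0 then (if t = j1 then 1 else if t = j2 then 2 else 0)
      else (if t = j0 then 1 else if t = j1 then 1 else 0), ?_, ?_, ?_, ?_⟩
  · intro i t; dsimp only; split_ifs <;> norm_num
  · intro i; dsimp only
    by_cases hi : i = i0
    · have w := key (fun t => if t = j1 then (1:ℤ) else if t = j2 then 2 else 0)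
      simp only [if_pos hi]
      rw [w, if_neg h01, if_neg h02, if_pos (rfl : j1 = j1), if_neg (Ne.symm h12),
        if_pos (rfl : j2 = j2), hi, eb0]
      ring
    · have hii : i = i1 := by
        have h1 := Fin.val_ne_of_ne hi
        have h2 := Fin.val_ne_of_ne hi01
        have := i.isLt; have := i0.isLt; have := i1.isLt
        exact Fin.ext (by omega)
      have w := key (fun t => if t = j0 then (1:ℤ) else if t = j1 then 1 else 0)
      simp only [if_neg hi]
      rw [w, if_pos (rfl : j0 = j0), if_neg (Ne.symm h01), if_pos (rfl : j1 = j1),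
        if_neg (Ne.symm h02), if_neg (Ne.symm h12), hii, eb1]
      ring
  · intro i; dsimp only
    by_cases hi : i = i0
    · simp only [if_pos hi]
      refine filter_pair j1 j2 h12 _ (fun t => ?_)
      rcases cover3 j0 j1 j2 t h01 h02 h12 with rfl | rfl | rfl
      · rw [if_neg h01, if_neg h02]; simp [h01, h02]
      · rw [if_pos rfl]; simp
      · rw [if_neg (Ne.symm h12), if_pos rfl]; simp [Ne.symm h12]
    · simp only [if_neg hi]
      refine filter_pair j0 j1 h01 _ (fun t => ?_)
      rcases cover3 j0 j1 j2 t h01 h02 h12 with rfl | rfl | rfl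
      · rw [if_pos rfl]; simp
      · rw [if_neg (Ne.symm h01), if_pos rfl]; simp [Ne.symm h01]
      · rw [if_neg (Ne.symm h02), if_neg (Ne.symm h12)]; simp [Ne.symm h02, Ne.symm h12]
  · intro t; dsimp only
    rw [← sum2 _ i0 i1 hi01]
    rw [if_pos (rfl : i0 = i0), if_neg (Ne.symm hi01)]
    rcases cover3 j0 j1 j2 t h01 h02 h12 with rfl | rfl | rfl
    · rw [if_neg h01, if_neg h02, if_pos (rfl : t = t), e0]; norm_num
    · rw [if_pos (rfl : t = t), if_neg (Ne.symm h01), if_pos (rfl : t = t), e1]; norm_num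
    · rw [if_neg (Ne.symm h12), if_pos (rfl : t = t), if_neg (Ne.symm h02),
        if_neg (Ne.symm h12), e2]
      norm_num

lemma step (n : ℕ) (hn : 2 ≤ n)
    (IH : ∀ (b : Fin n → ℤ) (a : Fin 3 → ℤ), (∀ i, 2 ≤ b i) → (∀ j, 1 ≤ a j) →
      (∀ j, a j ≤ (n:ℤ)) → (∃ j, a j < (n:ℤ)) → ∑ j, a j = ∑ i, b i → Good n b a)
    (b : Fin (n+1) → ℤ) (hb : ∀ i, 2 ≤ b i) (i0 : Fin (n+1)) (hB : 3 ≤ b i0)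
    (a : Fin 3 → ℤ) (ha1 : ∀ j, 1 ≤ a j) (ha2 : ∀ j, a j ≤ (n:ℤ)+1)
    (hex : ∃ j, a j < (n:ℤ)+1) (hsum : ∑ j, a j = ∑ i, b i) : Good (n+1) b a := by
  obtain ⟨j, k, l, hjk, hjl, hkl, hlk, hkj⟩ := sort3 a
  have hminlt : a l < (n:ℤ)+1 := by
    obtain ⟨t, ht⟩ := hex
    rcases cover3 j k l t hjk hjl hkl with rfl | rfl | rfl <;> omega
  have hS : ∑ i : Fin n, b (i0.succAbove i) = (∑ i, b i) - b i0 := by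
    rw [Fin.sum_univ_succAbove b i0]; ring
  have hSge : 2 * (n:ℤ) ≤ ∑ i : Fin n, b (i0.succAbove i) := by
    calc (2:ℤ) * n = ∑ _i : Fin n, (2:ℤ) := by
          rw [Finset.sum_const, Finset.card_univ, Fintype.card_fin]; push_cast; ring
    _ ≤ _ := Finset.sum_le_sum fun i _ => hb _
  have hsum3 : a j + a k + a l = ∑ i, b i := (sum3 a j k l hjk hjl hkl).trans hsum
  have haj2' := ha2 j
  have hak2' := ha2 k
  have haj3 : 3 ≤ a j := by omega
  have hak2 : 2 ≤ a k := by omega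
  have hsum2 : b i0 + 2 ≤ a j + a k := by omega
  set p := min (a j - 1) (b i0 - 1) with hp
  have hpc := min_choice (a j - 1) (b i0 - 1)
  have hp1 : p ≤ a j - 1 := min_le_left _ _
  have hp2 : p ≤ b i0 - 1 := min_le_right _ _
  have hp3 : 2 ≤ p := le_min (by omega) (by omega)
  set q := b i0 - p with hq
  have hq1 : 1 ≤ q := by omega
  have hqk : q ≤ a k - 1 := by rcases hpc with h | h <;> omega
  set a' : Fin 3 → ℤ := fun t => if t = j then a j - p else if t = k then a k - q else a t
    with ha'
  have ha'j : a' j = a j - p := by simp [ha']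
  have ha'k : a' k = a k - q := by simp [ha', Ne.symm hjk]
  have ha'l : a' l = a l := by simp [ha', Ne.symm hjl, Ne.symm hkl]
  have ha'1 : ∀ t, 1 ≤ a' t := by
    intro t
    rcases cover3 j k l t hjk hjl hkl with rfl | rfl | rfl
    · rw [ha'j]; omega
    · rw [ha'k]; omega
    · rw [ha'l]; exact ha1 _
  have ha'2 : ∀ t, a' t ≤ (n:ℤ) := by
    intro t
    rcases cover3 j k l t hjk hjl hkl with rfl | rfl | rfl
    · rw [ha'j]; omega
    · rw [ha'k]; omega
    · rw [ha'l]; omega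
  have ha'ex : ∃ t, a' t < (n:ℤ) := ⟨j, by rw [ha'j]; omega⟩
  have ha'sum : ∑ t, a' t = ∑ i : Fin n, b (i0.succAbove i) := by
    rw [← sum3 a' j k l hjk hjl hkl, ha'j, ha'k, ha'l]; omega
  obtain ⟨c', k0, k1, k2, k3⟩ := IH (fun i => b (i0.succAbove i)) a'
    (fun i => hb _) ha'1 ha'2 ha'ex ha'sum
  set r : Fin 3 → ℤ := fun t => if t = j then p else if t = k then q else 0 with hr
  have hrj : r j = p := by simp [hr]
  have hrk : r k = q := by simp [hr, Ne.symm hjk]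
  have hrl : r l = 0 := by simp [hr, Ne.symm hjl, Ne.symm hkl]
  refine ⟨i0.insertNth r c', ?_, ?_, ?_, ?_⟩
  · intro i t
    by_cases hi : i = i0
    · subst hi
      rw [Fin.insertNth_apply_same]
      rcases cover3 j k l t hjk hjl hkl with rfl | rfl | rfl
      · rw [hrj]; omega
      · rw [hrk]; omega
      · rw [hrl]
    · obtain ⟨z, rfl⟩ := Fin.exists_succAbove_eq hi
      rw [Fin.insertNth_apply_succAbove]
      exact k0 z t
  · intro i
    by_cases hi : i = i0
    · subst hi
      rw [Fin.insertNth_apply_same]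
      rw [show r 0 + r 1 + r 2 = ∑ t, r t from (Fin.sum_univ_three r).symm,
        ← sum3 r j k l hjk hjl hkl, hrj, hrk, hrl]
      omega
    · obtain ⟨z, rfl⟩ := Fin.exists_succAbove_eq hi
      rw [Fin.insertNth_apply_succAbove]
      exact k1 z
  · intro i
    by_cases hi : i = i0
    · subst hi
      rw [Fin.insertNth_apply_same]
      refine filter_pair j k hjk r (fun t => ?_)
      rcases cover3 j k l t hjk hjl hkl with rfl | rfl | rfl
      · rw [hrj]; exact ⟨fun _ => Or.inl rfl, fun _ => by omega⟩
      · rw [hrk]; exact ⟨fun _ => Or.inr rfl, fun _ => by omega⟩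
      · rw [hrl]
        constructor
        · intro h; exact absurd rfl h
        · intro h; exfalso; rcases h with h | h
          exacts [hjl h.symm, hkl h.symm]
    · obtain ⟨z, rfl⟩ := Fin.exists_succAbove_eq hi
      rw [Fin.insertNth_apply_succAbove]
      exact k2 z
  · intro t
    rw [Fin.sum_univ_succAbove
      (fun i => (i0.insertNth (α := fun _ => Fin 3 → ℤ) r c') i t) i0]
    simp only [Fin.insertNth_apply_same, Fin.insertNth_apply_succAbove]
    rw [k3 t]
    rcases cover3 j k l t hjk hjl hkl with rfl | rfl | rfl
    · rw [hrj, ha'j]; ring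
    · rw [hrk, ha'k]; ring
    · rw [hrl, ha'l]; ring

lemma inner : ∀ m : ℕ, ∀ (b : Fin m → ℤ) (a : Fin 3 → ℤ), (∀ i, 2 ≤ b i) →
    (∀ j, 1 ≤ a j) → (∀ j, a j ≤ (m:ℤ)) → (∃ j, a j < (m:ℤ)) →
    ∑ j, a j = ∑ i, b i → Good m b a := by
  intro m
  induction m using Nat.strong_induction_on with
  | _ m IH =>
  intro b a hb ha1 ha2 hex hsum
  by_cases hall : ∀ i, b i = 2
  · exact all2 m b hall a ha1 ha2 hsum
  · push_neg at hall
    obtain ⟨i0, hi0⟩ := hall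
    have hB : 3 ≤ b i0 := by have := hb i0; omega
    rcases m with _ | (_ | (_ | m3))
    · exact absurd i0.2 (by omega)
    · obtain ⟨t, ht⟩ := hex
      have := ha1 t
      norm_num at ht
      omega
    · refine base2 b hb i0 hB a ha1 (fun t => ?_) ?_ hsum
      · have := ha2 t; omega
      · obtain ⟨t, ht⟩ := hex; exact ⟨t, by omega⟩
    · refine step (m3+2) (by omega)
        (fun b' a' hb' h1 h2 h3 h4 => IH (m3+2) (by omega) b' a' hb' h1 h2 h3 h4)
        b hb i0 hB a ha1 (fun t => ?_) ?_ hsum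
      · have := ha2 t; push_cast at this ⊢; omega
      · obtain ⟨t, ht⟩ := hex; exact ⟨t, by push_cast at ht ⊢; omega⟩

/-- Combinatorial distribution lemma for three zeros. -/
theorem stmt2 (m : ℕ) (hm : 2 ≤ m) (b : Fin m → ℤ) (hb : ∀ i, 2 ≤ b i)
    (a : Fin 3 → ℤ) (ha : ∀ j, 0 < a j) (hmono : a 0 ≤ a 1 ∧ a 1 ≤ a 2)
    (hsum : a 0 + a 1 + a 2 = ∑ i, b i) (ha3 : a 2 ≤ (m : ℤ)) (ha1 : a 0 < (m : ℤ)) :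
    ∃ c : Fin m → Fin 3 → ℤ, (∀ i j, 0 ≤ c i j) ∧
      (∀ i, c i 0 + c i 1 + c i 2 = b i) ∧
      (∀ i, (Finset.univ.filter fun j => c i j ≠ 0).card = 2) ∧
      (∀ j, ∑ i, c i j = a j) := by
  have h2 : ∀ j : Fin 3, a j ≤ (m:ℤ) := by
    intro t
    obtain ⟨h01, h12⟩ := hmono
    rcases cover3 0 1 2 t (by decide) (by decide) (by decide) with rfl | rfl | rfl <;> omega
  exact inner m b a hb (fun t => by have := ha t; omega) h2 ⟨0, by
      have := hmono.1; have := hmono.2; omega⟩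
    (by rw [Fin.sum_univ_three]; exact hsum)
end

section
/- Let T be a finite bipartite tree with parts A and B, with positive real vertex weights having equal totals on A and B, and let f be its unique balanced flow (the edge function summing at each vertex to that vertex's weight). Then f is strictly positive on all edges if and only if the following leaf-stripping condition holds: whenever one repeatedly removes a leaf and subtracts its weight from the weight of its unique neighbor (performing between one and (number of edges) - 1 such removals in any order), all resulting vertex weights remain strictly positive. -/
attribute [local instance] Classical.propDecidable

open Finset

/-- `f` is a balanced flow on the graph `G` with vertex weights `w`. -/
def IsBalancedFlow {V : Type} [Fintype V] (G : SimpleGraph V) (w : V → ℝ)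
    (f : Sym2 V → ℝ) : Prop :=
  ∀ v : V, ∑ e ∈ Finset.univ.filter (fun e : Sym2 V => e ∈ G.edgeSet ∧ v ∈ e), f e = w v

/-- A state of the leaf-stripping process: the set of remaining vertices together
with the current weights. -/
abbrev FlowState (V : Type) := Finset V × (V → ℝ)

/-- One leaf-stripping step: remove a vertex `v` having exactly one neighbour `u`
among the remaining vertices, and subtract its weight from that of `u`. -/
def LeafStep {V : Type} (G : SimpleGraph V) (p q : FlowState V) : Prop :=
  ∃ v u, v ∈ p.1 ∧ u ∈ p.1 ∧ (∀ z ∈ p.1, (G.Adj v z ↔ z = u)) ∧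
    q.1 = p.1.erase v ∧ q.2 = Function.update p.2 u (p.2 u - p.2 v)

/-- `LeafSteps G k p q`: `q` is obtained from `p` by exactly `k` leaf-stripping steps. -/
def LeafSteps {V : Type} (G : SimpleGraph V) : ℕ → FlowState V → FlowState V → Prop
  | 0, p, q => p = q
  | n + 1, p, q => ∃ r, LeafStep G p r ∧ LeafSteps G n r q

namespace Stmt15Aux

variable {V : Type} [Fintype V] {G : SimpleGraph V}

set_option linter.unusedSectionVars false

/-- walk-connectivity within a finset -/
def WConn (G : SimpleGraph V) (S : Finset V) : Prop :=
  ∀ x ∈ S, ∀ y ∈ S, ∃ p : G.Walk x y, ∀ z ∈ p.support, z ∈ S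

/-- edges incident to `v` with both endpoints in `S` -/
noncomputable def EAt (G : SimpleGraph V) (S : Finset V) (v : V) : Finset (Sym2 V) :=
  Finset.univ.filter (fun e : Sym2 V => e ∈ G.edgeSet ∧ v ∈ e ∧ ∀ z ∈ e, z ∈ S)

lemma mem_EAt {S : Finset V} {v : V} {e : Sym2 V} :
    e ∈ EAt G S v ↔ e ∈ G.edgeSet ∧ v ∈ e ∧ ∀ z ∈ e, z ∈ S := by
  simp [EAt]

lemma walk_parity {A : Set V} (hbip : ∀ u v, G.Adj u v → (u ∈ A ↔ v ∉ A)) :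
    ∀ {x y : V} (p : G.Walk x y), Even p.length ↔ (x ∈ A ↔ y ∈ A) := by
  intro x y p
  induction p with
  | nil => simp
  | @cons x z y h q ih =>
    have hxz := hbip x z h
    simp only [SimpleGraph.Walk.length_cons, Nat.even_add_one, ih]
    tauto

lemma avoid_aux {S : Finset V} {v u : V}
    (hleaf : ∀ z ∈ S, G.Adj v z ↔ z = u) :
    ∀ (n : ℕ) {x y : V} (p : G.Walk x y), p.length ≤ n →
      (∀ z ∈ p.support, z ∈ S) → x ≠ v → y ≠ v →
      ∃ p' : G.Walk x y, ∀ z ∈ p'.support, z ∈ S.erase v := by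
  intro n
  induction n with
  | zero =>
    intro x y p hl hs hx _hy
    cases p with
    | nil =>
      refine ⟨.nil, ?_⟩
      intro z hz
      simp only [SimpleGraph.Walk.support_nil, List.mem_singleton] at hz
      subst hz
      exact Finset.mem_erase.mpr ⟨hx, hs _ (by simp)⟩
    | cons h q => simp at hl
  | succ n ih =>
    intro x y p hl hs hx hy
    cases p with
    | nil =>
      refine ⟨.nil, ?_⟩
      intro z hz
      simp only [SimpleGraph.Walk.support_nil, List.mem_singleton] at hz
      subst hz
      exact Finset.mem_erase.mpr ⟨hx, hs _ (by simp)⟩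
    | @cons _ z _ h q =>
      have hxS : x ∈ S := hs x (by simp)
      by_cases hzv : z = v
      · subst hzv
        have hxu : x = u := (hleaf x hxS).mp h.symm
        cases q with
        | nil => exact absurd rfl hy
        | @cons _ z' _ h' q' =>
          have hz'S : z' ∈ S := by
            apply hs
            simp [SimpleGraph.Walk.support_cons]
          have hz'u : z' = u := (hleaf z' hz'S).mp h'
          have hxz' : x = z' := by rw [hxu, hz'u]
          refine ih (q'.copy hxz'.symm rfl) ?_ ?_ hx hy
          · simp only [SimpleGraph.Walk.length_copy]
            simp only [SimpleGraph.Walk.length_cons] at hl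
            omega
          · intro w hw
            rw [SimpleGraph.Walk.support_copy] at hw
            apply hs
            simp [SimpleGraph.Walk.support_cons, hw]
      · obtain ⟨q', hq'⟩ := ih q
          (by simp only [SimpleGraph.Walk.length_cons] at hl; omega)
          (fun w hw => hs w (by simp [SimpleGraph.Walk.support_cons, hw])) hzv hy
        refine ⟨.cons h q', ?_⟩
        intro w hw
        rw [SimpleGraph.Walk.support_cons, List.mem_cons] at hw
        rcases hw with rfl | hw
        · exact Finset.mem_erase.mpr ⟨hx, hxS⟩
        · exact hq' w hw

lemma WConn.erase {S : Finset V} (hc : WConn G S) {v u : V} (_hv : v ∈ S)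
    (hleaf : ∀ z ∈ S, G.Adj v z ↔ z = u) : WConn G (S.erase v) := by
  intro x hx y hy
  obtain ⟨p, hp⟩ := hc x (Finset.mem_of_mem_erase hx) y (Finset.mem_of_mem_erase hy)
  obtain ⟨p', hp'⟩ := avoid_aux hleaf p.length p le_rfl hp
    (Finset.ne_of_mem_erase hx) (Finset.ne_of_mem_erase hy)
  exact ⟨p', hp'⟩

lemma edge_eq {e : Sym2 V} {x y : V} (hx : x ∈ e) (hy : y ∈ e) (hne : x ≠ y) :
    e = s(x, y) := (Sym2.mem_and_mem_iff hne).mp ⟨hx, hy⟩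

lemma EAt_erase_of_ne {S : Finset V} {v u : V}
    (hleaf : ∀ z ∈ S, G.Adj v z ↔ z = u) {z : V} (hzS : z ∈ S) (hzv : z ≠ v) (hzu : z ≠ u) :
    EAt G (S.erase v) z = EAt G S z := by
  ext e
  simp only [mem_EAt]
  constructor
  · rintro ⟨he, hze, hsub⟩
    exact ⟨he, hze, fun t ht => Finset.mem_of_mem_erase (hsub t ht)⟩
  · rintro ⟨he, hze, hsub⟩
    refine ⟨he, hze, fun t ht => Finset.mem_erase.mpr ⟨?_, hsub t ht⟩⟩
    rintro rfl
    have : e = s(z, t) := edge_eq hze ht hzv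
    rw [this, SimpleGraph.mem_edgeSet] at he
    exact hzu ((hleaf z hzS).mp he.symm)

lemma EAt_erase_u {S : Finset V} {v u : V} (hv : v ∈ S) (hu : u ∈ S)
    (hleaf : ∀ z ∈ S, G.Adj v z ↔ z = u) :
    EAt G (S.erase v) u = (EAt G S u).erase s(u, v) := by
  have hadj : G.Adj v u := (hleaf u hu).mpr rfl
  ext e
  simp only [mem_EAt, Finset.mem_erase]
  constructor
  · rintro ⟨he, hue, hsub⟩
    refine ⟨?_, he, hue, fun t ht => (hsub t ht).2⟩
    rintro rfl
    have hv2 : v ∈ s(u, v) := by simp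
    exact absurd rfl (hsub v hv2).1
  · rintro ⟨hne, he, hue, hsub⟩
    refine ⟨he, hue, fun t ht => ⟨?_, hsub t ht⟩⟩
    rintro rfl
    exact hne (edge_eq hue ht hadj.ne')

lemma EAt_self_leaf {S : Finset V} {v u : V} (hv : v ∈ S) (hu : u ∈ S)
    (hleaf : ∀ z ∈ S, G.Adj v z ↔ z = u) :
    EAt G S v = {s(v, u)} := by
  have hadj : G.Adj v u := (hleaf u hu).mpr rfl
  ext e
  simp only [mem_EAt, Finset.mem_singleton]
  constructor
  · rintro ⟨he, hve, hsub⟩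
    obtain ⟨y, rfl⟩ := Sym2.mem_iff_exists.mp hve
    rw [SimpleGraph.mem_edgeSet] at he
    have : y = u := (hleaf y (hsub y (by simp))).mp he
    rw [this]
  · rintro rfl
    refine ⟨G.mem_edgeSet.mpr hadj, by simp, ?_⟩
    intro t ht
    rcases Sym2.mem_iff.mp ht with rfl | rfl
    · exact hv
    · exact hu

/-- `EAt` of a pair, at an endpoint. -/
lemma EAt_pair {a b : V} (hab : G.Adj a b) :
    EAt G {a, b} a = {s(a, b)} := by
  ext e
  simp only [mem_EAt, Finset.mem_singleton]
  constructor
  · rintro ⟨he, hae, hsub⟩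
    obtain ⟨y, rfl⟩ := Sym2.mem_iff_exists.mp hae
    rw [SimpleGraph.mem_edgeSet] at he
    have hy : y ∈ ({a, b} : Finset V) := hsub y (by simp)
    rcases Finset.mem_insert.mp hy with rfl | hy
    · exact absurd rfl he.ne
    · rw [Finset.mem_singleton.mp hy]
  · rintro rfl
    refine ⟨G.mem_edgeSet.mpr hab, by simp, ?_⟩
    intro t ht
    rcases Sym2.mem_iff.mp ht with rfl | rfl <;> simp

/-- Main invariant along the stripping process. -/
def Inv (G : SimpleGraph V) (f : Sym2 V → ℝ) (p : FlowState V) : Prop :=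
  WConn G p.1 ∧ ∀ v ∈ p.1, p.2 v = ∑ e ∈ EAt G p.1 v, f e

lemma Inv.step {f : Sym2 V → ℝ} {p q : FlowState V}
    (hinv : Inv G f p) (hstep : LeafStep G p q) : Inv G f q := by
  obtain ⟨hc, hwt⟩ := hinv
  obtain ⟨v, u, hv, hu, hleaf, hq1, hq2⟩ := hstep
  have hadj : G.Adj v u := (hleaf u hu).mpr rfl
  constructor
  · rw [hq1]; exact hc.erase hv hleaf
  · intro z hz
    rw [hq1] at hz
    have hzS : z ∈ p.1 := Finset.mem_of_mem_erase hz
    have hzv : z ≠ v := Finset.ne_of_mem_erase hz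
    rw [hq2, hq1]
    by_cases hzu : z = u
    · subst hzu
      rw [Function.update_self, hwt z hzS, hwt v hv,
        EAt_erase_u hv hu hleaf, EAt_self_leaf hv hu hleaf,
        Finset.sum_singleton,
        Finset.sum_erase_eq_sub (mem_EAt.mpr ⟨G.mem_edgeSet.mpr hadj.symm, by simp,
          fun t ht => by rcases Sym2.mem_iff.mp ht with rfl | rfl; exacts [hzS, hv]⟩)]
      rw [Sym2.eq_swap]
    · rw [Function.update_of_ne hzu, hwt z hzS, EAt_erase_of_ne hleaf hzS hzv hzu]

lemma steps_inv {f : Sym2 V → ℝ} :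
    ∀ (k : ℕ) (p q : FlowState V), LeafSteps G k p q → Inv G f p →
      Inv G f q ∧ q.1.card + k = p.1.card := by
  intro k
  induction k with
  | zero => rintro p q rfl h; exact ⟨h, by simp⟩
  | succ n ih =>
    rintro p q ⟨r, hr, hrest⟩ h
    have hinvr := h.step hr
    obtain ⟨hq, hcard⟩ := ih r q hrest hinvr
    obtain ⟨v, u, hv, _, _, hr1, _⟩ := hr
    have : r.1.card + 1 = p.1.card := by
      rw [hr1, Finset.card_erase_of_mem hv]
      have := Finset.card_pos.mpr ⟨v, hv⟩
      omega
    exact ⟨hq, by omega⟩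

lemma pos_at {f : Sym2 V → ℝ} (hpos : ∀ e ∈ G.edgeSet, 0 < f e)
    {q : FlowState V} (hinv : Inv G f q) (h2 : 2 ≤ q.1.card) :
    ∀ v ∈ q.1, 0 < q.2 v := by
  intro v hv
  rw [hinv.2 v hv]
  apply Finset.sum_pos
  · intro e he
    exact hpos e (mem_EAt.mp he).1
  · obtain ⟨y, hy, hyv⟩ := Finset.exists_mem_ne (s := q.1) (by omega) v
    obtain ⟨p, hp⟩ := hinv.1 v hv y hy
    have hnn : ¬ p.Nil := SimpleGraph.Walk.not_nil_of_ne (Ne.symm hyv)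
    obtain ⟨z, h, t, hpe⟩ := SimpleGraph.Walk.not_nil_iff.mp hnn
    rw [hpe] at hp
    refine ⟨s(v, z), mem_EAt.mpr ⟨G.mem_edgeSet.mpr h, by simp, ?_⟩⟩
    intro t' ht'
    rcases Sym2.mem_iff.mp ht' with rfl | rfl
    · exact hv
    · exact hp _ (by simp [SimpleGraph.Walk.support_cons])

lemma inv_init (hG : G.IsTree) {w : V → ℝ} {f : Sym2 V → ℝ}
    (hf : ∀ v : V, ∑ e ∈ Finset.univ.filter (fun e : Sym2 V => e ∈ G.edgeSet ∧ v ∈ e), f e = w v) :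
    Inv G f (Finset.univ, w) := by
  constructor
  · intro x _ y _
    obtain ⟨p⟩ := hG.isConnected x y
    exact ⟨p, fun z _ => Finset.mem_univ z⟩
  · intro v _
    show w v = ∑ e ∈ EAt G Finset.univ v, f e
    rw [← hf v]
    congr 1
    ext e
    simp [EAt]

/-- In a tree, any two neighbours of `v` that are strictly closer to `a` coincide. -/
lemma unique_parent (hG : G.IsTree) {a v z z' : V}
    (hz : G.Adj v z) (hz' : G.Adj v z')
    (hd : G.dist a z + 1 = G.dist a v) (hd' : G.dist a z' + 1 = G.dist a v) :
    z = z' := by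
  have hconn := hG.isConnected
  obtain ⟨pz, hpz⟩ := hconn.exists_walk_length_eq_dist a z
  obtain ⟨pz', hpz'⟩ := hconn.exists_walk_length_eq_dist a z'
  have hbl : pz.bypass.length = G.dist a z :=
    le_antisymm (hpz ▸ SimpleGraph.Walk.length_bypass_le pz) (SimpleGraph.dist_le _)
  have hbl' : pz'.bypass.length = G.dist a z' :=
    le_antisymm (hpz' ▸ SimpleGraph.Walk.length_bypass_le pz') (SimpleGraph.dist_le _)
  have hvs : v ∉ pz.bypass.support := by
    intro hvp
    have h1 : G.dist a v ≤ (pz.bypass.takeUntil v hvp).length := SimpleGraph.dist_le _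
    have h2 := SimpleGraph.Walk.length_takeUntil_le pz.bypass hvp
    omega
  have hvs' : v ∉ pz'.bypass.support := by
    intro hvp
    have h1 : G.dist a v ≤ (pz'.bypass.takeUntil v hvp).length := SimpleGraph.dist_le _
    have h2 := SimpleGraph.Walk.length_takeUntil_le pz'.bypass hvp
    omega
  have hP1 : (SimpleGraph.Walk.cons hz pz.bypass.reverse).IsPath := by
    apply SimpleGraph.Walk.IsPath.cons (pz.bypass_isPath.reverse)
    rwa [SimpleGraph.Walk.support_reverse, List.mem_reverse]
  have hP2 : (SimpleGraph.Walk.cons hz' pz'.bypass.reverse).IsPath := by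
    apply SimpleGraph.Walk.IsPath.cons (pz'.bypass_isPath.reverse)
    rwa [SimpleGraph.Walk.support_reverse, List.mem_reverse]
  have heq : (SimpleGraph.Walk.cons hz pz.bypass.reverse)
      = (SimpleGraph.Walk.cons hz' pz'.bypass.reverse) :=
    ((hG.existsUnique_path v a).unique hP1 hP2)
  have hsup := congrArg SimpleGraph.Walk.support heq
  rw [SimpleGraph.Walk.support_cons, SimpleGraph.Walk.support_cons,
    SimpleGraph.Walk.support_eq_cons pz.bypass.reverse,
    SimpleGraph.Walk.support_eq_cons pz'.bypass.reverse] at hsup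
  simp only [List.cons.injEq] at hsup
  exact hsup.2.1

lemma exists_leaf (hG : G.IsTree) {A : Set V}
    (hbip : ∀ u v, G.Adj u v → (u ∈ A ↔ v ∉ A))
    {S : Finset V} (hc : WConn G S) {a b : V} (ha : a ∈ S) (hb : b ∈ S)
    (hab : G.Adj a b) (h3 : 3 ≤ S.card) :
    ∃ v ∈ S, v ≠ a ∧ v ≠ b ∧ ∃ u ∈ S, ∀ z ∈ S, G.Adj v z ↔ z = u := by
  have hconn := hG.isConnected
  set T : Finset V := S \ {a, b} with hT
  have hTne : T.Nonempty := by
    rw [← Finset.card_pos]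
    have h1 : S.card - ({a, b} : Finset V).card ≤ T.card := Finset.le_card_sdiff _ _
    have h2 : ({a, b} : Finset V).card ≤ 2 := Finset.card_insert_le _ _ |>.trans (by simp)
    omega
  obtain ⟨v, hvT, hvmax⟩ := T.exists_max_image (fun x => G.dist a x) hTne
  obtain ⟨hvS, hvab⟩ := Finset.mem_sdiff.mp hvT
  have hva : v ≠ a := fun h => hvab (by simp [h])
  have hvb : v ≠ b := fun h => hvab (by simp [h])
  have hmaxS : ∀ x ∈ S, G.dist a x ≤ G.dist a v := by
    intro x hx
    by_cases hxab : x ∈ ({a, b} : Finset V)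
    · have h1le : 1 ≤ G.dist a v := hconn.pos_dist_of_ne (Ne.symm hva)
      rcases Finset.mem_insert.mp hxab with rfl | hxb
      · simp [SimpleGraph.dist_self]
      · rw [Finset.mem_singleton.mp hxb]
        have : G.dist a b = 1 := SimpleGraph.dist_eq_one_iff_adj.mpr hab
        omega
    · exact hvmax x (Finset.mem_sdiff.mpr ⟨hx, hxab⟩)
  have hpar : ∀ x : V, (Even (G.dist a x) ↔ (a ∈ A ↔ x ∈ A)) := by
    intro x
    obtain ⟨p, hp⟩ := hconn.exists_walk_length_eq_dist a x
    rw [← hp]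
    exact walk_parity hbip p
  have hnbr : ∀ z ∈ S, G.Adj v z → G.dist a z + 1 = G.dist a v := by
    intro z hzS hadj
    have hle : G.dist a z ≤ G.dist a v := hmaxS z hzS
    have htri : G.dist a v ≤ G.dist a z + 1 := by
      have h1 : G.dist z v = 1 := SimpleGraph.dist_eq_one_iff_adj.mpr hadj.symm
      have := hconn.dist_triangle (u := a) (v := z) (w := v)
      omega
    have hne : G.dist a z ≠ G.dist a v := by
      intro hEq
      have h1 := hpar z
      have h2 := hpar v
      rw [hEq] at h1
      have h3 := hbip v z hadj
      tauto
    omega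
  obtain ⟨p, hp⟩ := hc v hvS a ha
  have hnn : ¬ p.Nil := SimpleGraph.Walk.not_nil_of_ne hva
  obtain ⟨u, hu, t, hpe⟩ := SimpleGraph.Walk.not_nil_iff.mp hnn
  have huS : u ∈ S := by
    apply hp
    rw [hpe]
    simp [SimpleGraph.Walk.support_cons]
  refine ⟨v, hvS, hva, hvb, u, huS, ?_⟩
  intro z hzS
  constructor
  · intro hadj
    exact unique_parent hG hadj hu (hnbr z hzS hadj) (hnbr u huS hu)
  · rintro rfl
    exact hu

lemma strip (hG : G.IsTree) {A : Set V}
    (hbip : ∀ u v, G.Adj u v → (u ∈ A ↔ v ∉ A)) :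
    ∀ (n : ℕ) (S : Finset V), S.card = n → WConn G S →
      ∀ {a b : V}, a ∈ S → b ∈ S → G.Adj a b →
      ∀ ω : V → ℝ, ∃ ω', LeafSteps G (S.card - 2) (S, ω) ({a, b}, ω') := by
  intro n
  induction n using Nat.strong_induction_on with
  | _ n ih =>
    intro S hcard hc a b ha hb hab ω
    by_cases h3 : 3 ≤ S.card
    · obtain ⟨v, hvS, hva, hvb, u, huS, hleaf⟩ := exists_leaf hG hbip hc ha hb hab h3
      set r : FlowState V := (S.erase v, Function.update ω u (ω u - ω v)) with hr
      have hstep : LeafStep G (S, ω) r := ⟨v, u, hvS, huS, hleaf, rfl, rfl⟩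
      have hcr : (S.erase v).card = n - 1 := by
        rw [Finset.card_erase_of_mem hvS]; omega
      obtain ⟨ω', hsteps⟩ := ih (n - 1) (by omega) (S.erase v) hcr (hc.erase hvS hleaf)
        (Finset.mem_erase.mpr ⟨Ne.symm hva, ha⟩) (Finset.mem_erase.mpr ⟨Ne.symm hvb, hb⟩)
        hab r.2
      refine ⟨ω', ?_⟩
      have hnum : S.card - 2 = ((S.erase v).card - 2) + 1 := by
        rw [Finset.card_erase_of_mem hvS]; omega
      rw [hnum]
      exact ⟨r, hstep, hsteps⟩
    · have hsub : ({a, b} : Finset V) ⊆ S := by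
        intro x hx
        rcases Finset.mem_insert.mp hx with rfl | hx
        · exact ha
        · rw [Finset.mem_singleton.mp hx]; exact hb
      have hSab : ({a, b} : Finset V) = S := by
        apply Finset.eq_of_subset_of_card_le hsub
        rw [Finset.card_pair hab.ne]
        omega
      refine ⟨ω, ?_⟩
      have h0 : S.card - 2 = 0 := by omega
      rw [h0]
      show (S, ω) = ({a, b}, ω)
      rw [hSab]

end Stmt15Aux

open Stmt15Aux

/-- On a finite bipartite tree with positive weights of equal totals, the balanced
flow is strictly positive on all edges iff every sequence of between `1` and
`#edges - 1` leaf-stripping steps keeps all weights strictly positive. -/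
theorem stmt15 {V : Type} [Fintype V] (G : SimpleGraph V) (hG : G.IsTree)
    (A : Set V) (hbip : ∀ u v, G.Adj u v → (u ∈ A ↔ v ∉ A))
    (w : V → ℝ) (hw : ∀ v, 0 < w v)
    (htot : ∑ v ∈ Finset.univ.filter (· ∈ A), w v =
      ∑ v ∈ Finset.univ.filter (· ∉ A), w v)
    (f : Sym2 V → ℝ) (hf : IsBalancedFlow G w f) :
    (∀ e ∈ G.edgeSet, 0 < f e) ↔
      (∀ k, 1 ≤ k → k ≤ G.edgeFinset.card - 1 →
        ∀ q : FlowState V, LeafSteps G k (Finset.univ, w) q → ∀ v ∈ q.1, 0 < q.2 v) := by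
  have hinit : Inv G f (Finset.univ, w) := inv_init hG hf
  have hm : G.edgeFinset.card + 1 = Fintype.card V := hG.card_edgeFinset
  constructor
  · intro hpos k hk1 hk2 q hsteps
    obtain ⟨hinvq, hcard⟩ := steps_inv k _ q hsteps hinit
    rw [Finset.card_univ] at hcard
    exact pos_at hpos hinvq (by omega)
  · intro hstrip e he
    induction e using Sym2.ind with
    | _ a b =>
    have hab : G.Adj a b := G.mem_edgeSet.mp he
    have hcard2 : 2 ≤ Fintype.card V := Fintype.one_lt_card_iff.mpr ⟨a, b, hab.ne⟩
    have hwuniv : WConn G Finset.univ := hinit.1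
    by_cases hn : Fintype.card V ≤ 2
    · -- exactly two vertices: `univ = {a, b}`
      have huniv : ({a, b} : Finset V) = Finset.univ := by
        apply Finset.eq_of_subset_of_card_le (Finset.subset_univ _)
        rw [Finset.card_pair hab.ne, Finset.card_univ]
        omega
      have := hinit.2 a (Finset.mem_univ a)
      rw [← huniv, EAt_pair hab, Finset.sum_singleton] at this
      · rw [← this] at *
        exact hw a
    · -- at least three vertices: strip down to `{a, b}`
      obtain ⟨ω', hsteps⟩ := strip hG hbip (Fintype.card V) Finset.univ
        (Finset.card_univ) hwuniv (Finset.mem_univ a) (Finset.mem_univ b) hab w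
      rw [Finset.card_univ] at hsteps
      have hk1 : 1 ≤ Fintype.card V - 2 := by omega
      have hk2 : Fintype.card V - 2 ≤ G.edgeFinset.card - 1 := by omega
      have hqpos := hstrip _ hk1 hk2 _ hsteps a (by simp)
      obtain ⟨hinvq, _⟩ := steps_inv _ _ _ hsteps hinit
      have := hinvq.2 a (by simp)
      rw [EAt_pair hab, Finset.sum_singleton] at this
      rw [← this]
      exact hqpos
end
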